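/- If a sequence of parameters satisfies ‖Δ_1^{(n)}‖_2 → 0 and ‖τ^{(n)} - I_p‖_2 → 0, then the standardized score T^{(1)} (hard or soft assignment) converges almost surely to Z. -/

import Mathlib

open Matrix MeasureTheory ProbabilityTheory Filter

/-- Multivariate Gaussian density `φ(y; μ, Σ)` on `ℝ^p`. -/
noncomputable def gphi (p : ℕ) (μ : Fin p → ℝ) (Sig : Matrix (Fin p) (Fin p) ℝ)
    (y : Fin p → ℝ) : ℝ :=
  (2 * Real.pi) ^ (-(p : ℝ) / 2) * Sig.det ^ (-(1 : ℝ) / 2)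
    * Real.exp (-((y - μ) ⬝ᵥ Sig⁻¹.mulVec (y - μ)) / 2)

/-- Posterior probability `w₁ = π₁ φ₁(y)/(π₁ φ₁(y) + π₂ φ₂(y))` of class 1. -/
noncomputable def wpost (p : ℕ) (μ₁ μ₂ : Fin p → ℝ)
    (Sig₁ Sig₂ : Matrix (Fin p) (Fin p) ℝ) (π₁ π₂ : ℝ) (y : Fin p → ℝ) : ℝ :=
  π₁ * gphi p μ₁ Sig₁ y / (π₁ * gphi p μ₁ Sig₁ y + π₂ * gphi p μ₂ Sig₂ y)

/-- Standardized score `T⁽¹⁾ = (ŝ₁ Σ₁^{-1/2} + ŝ₂ Σ₂^{-1/2})(y - ŝ₁ μ₁ - ŝ₂ μ₂)`,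
with `ŝ₂ = 1 - ŝ₁` and `S i = Σ_i^{1/2}`. -/
noncomputable def Tstd (p : ℕ) (μ₁ μ₂ : Fin p → ℝ)
    (S₁ S₂ : Matrix (Fin p) (Fin p) ℝ) (s1 : ℝ) (y : Fin p → ℝ) : Fin p → ℝ :=
  (s1 • S₁⁻¹ + (1 - s1) • S₂⁻¹).mulVec (y - s1 • μ₁ - (1 - s1) • μ₂)

/-- Euclidean norm of a vector in `ℝ^p`. -/
noncomputable def enorm2 (p : ℕ) (v : Fin p → ℝ) : ℝ := Real.sqrt (∑ i, v i ^ 2)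

/-- Frobenius norm of a `p × p` real matrix. -/
noncomputable def frob (p : ℕ) (M : Matrix (Fin p) (Fin p) ℝ) : ℝ :=
  Real.sqrt (∑ i, ∑ j, M i j ^ 2)

lemma gphi_pos {p : ℕ} {μ : Fin p → ℝ} {Sig : Matrix (Fin p) (Fin p) ℝ}
    (h : 0 < Sig.det) (y : Fin p → ℝ) : 0 < gphi p μ Sig y := by
  unfold gphi
  positivity

lemma wpost_mem {p : ℕ} {μ₁ μ₂ : Fin p → ℝ} {Sig₁ Sig₂ : Matrix (Fin p) (Fin p) ℝ}
    {π₁ π₂ : ℝ} (h₁ : 0 < Sig₁.det) (h₂ : 0 < Sig₂.det) (hp₁ : 0 < π₁) (hp₂ : 0 < π₂)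
    (y : Fin p → ℝ) : wpost p μ₁ μ₂ Sig₁ Sig₂ π₁ π₂ y ∈ Set.Icc (0:ℝ) 1 := by
  have g₁ := gphi_pos (μ := μ₁) h₁ y
  have g₂ := gphi_pos (μ := μ₂) h₂ y
  have hA : 0 < π₁ * gphi p μ₁ Sig₁ y := mul_pos hp₁ g₁
  have hB : 0 < π₂ * gphi p μ₂ Sig₂ y := mul_pos hp₂ g₂
  constructor
  · exact div_nonneg hA.le (by linarith)
  · rw [wpost, div_le_one (by linarith)]; linarith

lemma coord_le_enorm2 {p : ℕ} (v : Fin p → ℝ) (i : Fin p) : |v i| ≤ enorm2 p v := by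
  rw [enorm2, ← Real.sqrt_sq_eq_abs (v i)]
  exact Real.sqrt_le_sqrt (Finset.single_le_sum (fun j _ => sq_nonneg (v j)) (Finset.mem_univ i))

lemma entry_le_frob {p : ℕ} (M : Matrix (Fin p) (Fin p) ℝ) (i j : Fin p) :
    |M i j| ≤ frob p M := by
  rw [frob, ← Real.sqrt_sq_eq_abs (M i j)]
  apply Real.sqrt_le_sqrt
  calc M i j ^ 2 ≤ ∑ k, M i k ^ 2 :=
        Finset.single_le_sum (fun k _ => sq_nonneg (M i k)) (Finset.mem_univ j)
    _ ≤ ∑ l, ∑ k, M l k ^ 2 :=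
        Finset.single_le_sum (fun l _ => Finset.sum_nonneg fun k _ => sq_nonneg (M l k))
          (Finset.mem_univ i)

lemma tendsto_mulVec_apply {p : ℕ} {M : ℕ → Matrix (Fin p) (Fin p) ℝ} {v : ℕ → Fin p → ℝ}
    {M₀ : Matrix (Fin p) (Fin p) ℝ} {v₀ : Fin p → ℝ}
    (hM : ∀ i j, Tendsto (fun n => M n i j) atTop (nhds (M₀ i j)))
    (hv : ∀ j, Tendsto (fun n => v n j) atTop (nhds (v₀ j))) (i : Fin p) :
    Tendsto (fun n => (M n).mulVec (v n) i) atTop (nhds (M₀.mulVec v₀ i)) := by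
  simp only [Matrix.mulVec, dotProduct]
  exact tendsto_finset_sum _ fun j _ => (hM i j).mul (hv j)

lemma Tstd_case1 {p : ℕ} {μ₁ μ₂ : Fin p → ℝ} {S₁ S₂ : Matrix (Fin p) (Fin p) ℝ}
    (h₁ : IsUnit S₁.det) (s : ℝ) (z : Fin p → ℝ) :
    Tstd p μ₁ μ₂ S₁ S₂ s (S₁.mulVec z + μ₁) =
      z + (1-s) • ((S₂⁻¹*S₁).mulVec z - z)
        + ((1-s)*s) • (S₁⁻¹.mulVec (μ₁-μ₂))
        + ((1-s)*(1-s)) • ((S₂⁻¹*S₁).mulVec (S₁⁻¹.mulVec (μ₁-μ₂))) := by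
  have harg : S₁.mulVec z + μ₁ - s • μ₁ - (1 - s) • μ₂
      = S₁.mulVec (z + (1-s) • (S₁⁻¹.mulVec (μ₁ - μ₂))) := by
    rw [Matrix.mulVec_add, Matrix.mulVec_smul, Matrix.mulVec_mulVec,
      Matrix.mul_nonsing_inv _ h₁, Matrix.one_mulVec]
    module
  rw [Tstd, harg, Matrix.mulVec_mulVec, Matrix.add_mul, Matrix.smul_mul, Matrix.smul_mul,
    Matrix.nonsing_inv_mul _ h₁, Matrix.add_mulVec, Matrix.smul_mulVec,
    Matrix.smul_mulVec, Matrix.one_mulVec, Matrix.mulVec_add, Matrix.mulVec_smul]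
  module

lemma Tstd_case2 {p : ℕ} {μ₁ μ₂ : Fin p → ℝ} {S₁ S₂ : Matrix (Fin p) (Fin p) ℝ}
    (h₁ : IsUnit S₁.det) (h₂ : IsUnit S₂.det) (s : ℝ) (z : Fin p → ℝ) :
    Tstd p μ₁ μ₂ S₁ S₂ s (S₂.mulVec z + μ₂) =
      z + s • ((S₁⁻¹*S₂).mulVec z - z)
        - (s*s) • (S₁⁻¹.mulVec (μ₁-μ₂))
        - (s*(1-s)) • ((S₂⁻¹*S₁).mulVec (S₁⁻¹.mulVec (μ₁-μ₂))) := by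
  have hμ : μ₁ - μ₂ = S₁.mulVec (S₁⁻¹.mulVec (μ₁ - μ₂)) := by
    rw [Matrix.mulVec_mulVec, Matrix.mul_nonsing_inv _ h₁, Matrix.one_mulVec]
  have harg : S₂.mulVec z + μ₂ - s • μ₁ - (1 - s) • μ₂
      = S₂.mulVec (z - s • ((S₂⁻¹*S₁).mulVec (S₁⁻¹.mulVec (μ₁ - μ₂)))) := by
    rw [Matrix.mulVec_sub, Matrix.mulVec_smul, Matrix.mulVec_mulVec, ← Matrix.mul_assoc,
      Matrix.mul_nonsing_inv _ h₂, Matrix.one_mul]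
    rw [← hμ]
    module
  have hBτ : (S₁⁻¹*S₂) * (S₂⁻¹*S₁) = 1 := by
    rw [Matrix.mul_assoc, ← Matrix.mul_assoc S₂, Matrix.mul_nonsing_inv _ h₂, Matrix.one_mul,
      Matrix.nonsing_inv_mul _ h₁]
  rw [Tstd, harg, Matrix.mulVec_mulVec, Matrix.add_mul, Matrix.smul_mul, Matrix.smul_mul,
    Matrix.nonsing_inv_mul _ h₂, Matrix.add_mulVec, Matrix.smul_mulVec,
    Matrix.smul_mulVec, Matrix.one_mulVec, Matrix.mulVec_sub, Matrix.mulVec_smul,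
    Matrix.mulVec_mulVec, hBτ, Matrix.one_mulVec]
  module

/-- Theorem 1, part 3: if a sequence of parameters satisfies
`‖Δ₁⁽ⁿ⁾‖₂ → 0` and `‖τ⁽ⁿ⁾ - I_p‖₂ → 0`, then the standardized score `T⁽¹⁾`
(hard or soft assignment) converges almost surely to `Z`. -/
theorem stmt8 {Ω : Type*} [MeasurableSpace Ω] (P : Measure Ω) [IsProbabilityMeasure P]
    (p : ℕ) (μ₁ μ₂ : ℕ → Fin p → ℝ)
    (Sig₁ Sig₂ S₁ S₂ : ℕ → Matrix (Fin p) (Fin p) ℝ)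
    (hSig₁ : ∀ n, (Sig₁ n).PosDef) (hSig₂ : ∀ n, (Sig₂ n).PosDef)
    (hS₁ : ∀ n, (S₁ n).PosDef) (hS₂ : ∀ n, (S₂ n).PosDef)
    (hsq₁ : ∀ n, S₁ n * S₁ n = Sig₁ n) (hsq₂ : ∀ n, S₂ n * S₂ n = Sig₂ n)
    (π₁ : ℝ) (hπ : π₁ ∈ Set.Ioo (0 : ℝ) 1)
    (Z : Ω → Fin p → ℝ) (c : Ω → Fin 2)
    (hZmeas : Measurable Z) (hcmeas : Measurable c)
    (hZ : Measure.map Z P = Measure.pi fun _ : Fin p => gaussianReal 0 1)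
    (hc : P {ω | c ω = 1} = ENNReal.ofReal π₁)
    (hindep : IndepFun Z c P)
    (Y : ℕ → Ω → Fin p → ℝ)
    (hY : ∀ n ω, Y n ω =
      if c ω = 1 then (S₁ n).mulVec (Z ω) + μ₁ n else (S₂ n).mulVec (Z ω) + μ₂ n)
    (s1 : ℕ → (Fin p → ℝ) → ℝ)
    (hassign :
      (∀ n, s1 n = fun y =>
        if 1 / 2 < wpost p (μ₁ n) (μ₂ n) (Sig₁ n) (Sig₂ n) π₁ (1 - π₁) y then 1 else 0)
      ∨ (∀ n, s1 n = fun y => wpost p (μ₁ n) (μ₂ n) (Sig₁ n) (Sig₂ n) π₁ (1 - π₁) y))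
    -- ‖Δ₁⁽ⁿ⁾‖₂ → 0 and ‖τ⁽ⁿ⁾ - I_p‖₂ → 0:
    (hΔ : Tendsto (fun n => enorm2 p ((S₁ n)⁻¹.mulVec (μ₁ n - μ₂ n))) atTop (nhds 0))
    (hτ : Tendsto (fun n => frob p ((S₂ n)⁻¹ * S₁ n - 1)) atTop (nhds 0)) :
    ∀ᵐ ω ∂P, Tendsto (fun n => Tstd p (μ₁ n) (μ₂ n) (S₁ n) (S₂ n)
      (s1 n (Y n ω)) (Y n ω)) atTop (nhds (Z ω)) := by
  have hS₁u : ∀ n, IsUnit (S₁ n).det := fun n => isUnit_iff_ne_zero.2 (hS₁ n).det_pos.ne'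
  have hS₂u : ∀ n, IsUnit (S₂ n).det := fun n => isUnit_iff_ne_zero.2 (hS₂ n).det_pos.ne'
  have hπ2 : 0 < 1 - π₁ := by linarith [hπ.2]
  -- s1 takes values in [0, 1]
  have hs0 : ∀ n y, 0 ≤ s1 n y ∧ s1 n y ≤ 1 := by
    intro n y
    rcases hassign with h | h
    · simp only [h n]; split_ifs <;> norm_num
    · simp only [h n]
      have := wpost_mem (μ₁ := μ₁ n) (μ₂ := μ₂ n) (hSig₁ n).det_pos (hSig₂ n).det_pos hπ.1 hπ2 y
      exact ⟨this.1, this.2⟩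
  -- Δ → 0 coordinatewise
  have hΔi : ∀ i, Tendsto (fun n => (S₁ n)⁻¹.mulVec (μ₁ n - μ₂ n) i) atTop (nhds 0) := fun i =>
    squeeze_zero_norm
      (fun n => by
        simpa [Real.norm_eq_abs] using coord_le_enorm2 ((S₁ n)⁻¹.mulVec (μ₁ n - μ₂ n)) i) hΔ
  -- τ → 1 entrywise
  have hτij : ∀ i j, Tendsto (fun n => ((S₂ n)⁻¹ * S₁ n) i j) atTop
      (nhds ((1 : Matrix (Fin p) (Fin p) ℝ) i j)) := by
    intro i j
    have h0 : Tendsto (fun n => ((S₂ n)⁻¹ * S₁ n) i j - (1 : Matrix (Fin p) (Fin p) ℝ) i j)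
        atTop (nhds 0) :=
      squeeze_zero_norm
        (fun n => by
          rw [Real.norm_eq_abs, ← Matrix.sub_apply]
          exact entry_le_frob ((S₂ n)⁻¹ * S₁ n - 1) i j) hτ
    exact tendsto_sub_nhds_zero_iff.1 h0
  -- τ → 1, hence τ⁻¹ → 1
  have hτt : Tendsto (fun n => (S₂ n)⁻¹ * S₁ n) atTop (nhds (1 : Matrix (Fin p) (Fin p) ℝ)) := by
    exact tendsto_pi_nhds.2 fun i => tendsto_pi_nhds.2 fun j => hτij i j
  have hRinv : ContinuousAt (Ring.inverse : ℝ → ℝ) ((1 : Matrix (Fin p) (Fin p) ℝ).det) := by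
    simp only [Matrix.det_one]
    have h : (Ring.inverse : ℝ → ℝ) = fun x => x⁻¹ := by
      funext x; exact Ring.inverse_eq_inv x
    rw [h]
    exact continuousAt_inv₀ one_ne_zero
  have hτinvt : Tendsto (fun n => ((S₂ n)⁻¹ * S₁ n)⁻¹) atTop
      (nhds (1 : Matrix (Fin p) (Fin p) ℝ)) := by
    have := (continuousAt_matrix_inv (1 : Matrix (Fin p) (Fin p) ℝ) hRinv).tendsto.comp hτt
    simpa [Function.comp_def, inv_one] using this
  have hτinvij : ∀ i j, Tendsto (fun n => ((S₂ n)⁻¹ * S₁ n)⁻¹ i j) atTop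
      (nhds ((1 : Matrix (Fin p) (Fin p) ℝ) i j)) := by
    intro i j
    exact tendsto_pi_nhds.1 (tendsto_pi_nhds.1 hτinvt i) j
  have hB : ∀ n, (S₁ n)⁻¹ * S₂ n = ((S₂ n)⁻¹ * S₁ n)⁻¹ := by
    intro n
    rw [Matrix.mul_inv_rev, Matrix.nonsing_inv_nonsing_inv _ (hS₂u n)]
  apply ae_of_all
  intro ω
  set z := Z ω with hz
  -- coordinatewise limits used in the bounds
  have hτΔ : ∀ i, Tendsto
      (fun n => ((S₂ n)⁻¹ * S₁ n).mulVec ((S₁ n)⁻¹.mulVec (μ₁ n - μ₂ n)) i) atTop (nhds 0) := by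
    intro i
    have := tendsto_mulVec_apply (M₀ := 1) (v₀ := 0) hτij hΔi i
    simpa using this
  have hτz : ∀ i, Tendsto (fun n => ((S₂ n)⁻¹ * S₁ n).mulVec z i - z i) atTop (nhds 0) := by
    intro i
    have := tendsto_mulVec_apply (M₀ := 1) (v₀ := z) hτij (fun j => tendsto_const_nhds) i
    rw [Matrix.one_mulVec] at this
    exact tendsto_sub_nhds_zero_iff.2 this
  have hBz : ∀ i, Tendsto (fun n => ((S₁ n)⁻¹ * S₂ n).mulVec z i - z i) atTop (nhds 0) := by
    intro i
    have h1 := tendsto_mulVec_apply (M₀ := 1) (v₀ := z) hτinvij (fun j => tendsto_const_nhds) i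
    rw [Matrix.one_mulVec] at h1
    have h2 : Tendsto (fun n => ((S₁ n)⁻¹ * S₂ n).mulVec z i) atTop (nhds (z i)) := by
      simpa only [hB] using h1
    exact tendsto_sub_nhds_zero_iff.2 h2
  rw [tendsto_pi_nhds]
  intro i
  rw [← tendsto_sub_nhds_zero_iff]
  by_cases hcc : c ω = 1
  · -- class 1
    have hYn : ∀ n, Y n ω = (S₁ n).mulVec z + μ₁ n := fun n => by rw [hY n ω, if_pos hcc]
    apply squeeze_zero_norm
      (a := fun n => |((S₂ n)⁻¹ * S₁ n).mulVec z i - z i|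
        + (|(S₁ n)⁻¹.mulVec (μ₁ n - μ₂ n) i|
          + |((S₂ n)⁻¹ * S₁ n).mulVec ((S₁ n)⁻¹.mulVec (μ₁ n - μ₂ n)) i|))
    · intro n
      obtain ⟨hs1, hs2⟩ := hs0 n (Y n ω)
      set s := s1 n (Y n ω) with hsdef
      have hid := Tstd_case1 (μ₁ := μ₁ n) (μ₂ := μ₂ n) (S₂ := S₂ n) (hS₁u n) s z
      rw [Real.norm_eq_abs, hYn n, hid]
      simp only [Pi.add_apply, Pi.smul_apply, Pi.sub_apply, smul_eq_mul]
      set A := ((S₂ n)⁻¹ * S₁ n).mulVec z i - z i with hA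
      set B := (S₁ n)⁻¹.mulVec (μ₁ n - μ₂ n) i with hBd
      set C := ((S₂ n)⁻¹ * S₁ n).mulVec ((S₁ n)⁻¹.mulVec (μ₁ n - μ₂ n)) i with hC
      have e1 : |1 - s| ≤ 1 := by rw [abs_of_nonneg (by linarith)]; linarith
      have e2 : |s| ≤ 1 := by rw [abs_of_nonneg hs1]; exact hs2
      have key : z i + (1 - s) * A + (1 - s) * s * B + (1 - s) * (1 - s) * C - z i
          = (1 - s) * A + ((1 - s) * s) * B + ((1 - s) * (1 - s)) * C := by ring
      rw [key]
      have b1 : |(1 - s) * A| ≤ |A| := by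
        rw [abs_mul]; exact mul_le_of_le_one_left (abs_nonneg A) e1
      have b2 : |(1 - s) * s * B| ≤ |B| := by
        rw [abs_mul, abs_mul]
        exact mul_le_of_le_one_left (abs_nonneg B)
          (mul_le_one₀ e1 (abs_nonneg s) e2)
      have b3 : |(1 - s) * (1 - s) * C| ≤ |C| := by
        rw [abs_mul, abs_mul]
        exact mul_le_of_le_one_left (abs_nonneg C)
          (mul_le_one₀ e1 (abs_nonneg (1 - s)) e1)
      calc |(1 - s) * A + (1 - s) * s * B + (1 - s) * (1 - s) * C|
          ≤ |(1 - s) * A| + |(1 - s) * s * B| + |(1 - s) * (1 - s) * C| := abs_add_three _ _ _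
        _ ≤ |A| + (|B| + |C|) := by linarith
    · simpa using ((hτz i).abs.add ((hΔi i).abs.add ((hτΔ i).abs)))
  · -- class 2
    have hYn : ∀ n, Y n ω = (S₂ n).mulVec z + μ₂ n := fun n => by rw [hY n ω, if_neg hcc]
    apply squeeze_zero_norm
      (a := fun n => |((S₁ n)⁻¹ * S₂ n).mulVec z i - z i|
        + (|(S₁ n)⁻¹.mulVec (μ₁ n - μ₂ n) i|
          + |((S₂ n)⁻¹ * S₁ n).mulVec ((S₁ n)⁻¹.mulVec (μ₁ n - μ₂ n)) i|))
    · intro n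
      obtain ⟨hs1, hs2⟩ := hs0 n (Y n ω)
      set s := s1 n (Y n ω) with hsdef
      have hid := Tstd_case2 (μ₁ := μ₁ n) (μ₂ := μ₂ n) (hS₁u n) (hS₂u n) s z
      rw [Real.norm_eq_abs, hYn n, hid]
      simp only [Pi.add_apply, Pi.smul_apply, Pi.sub_apply, smul_eq_mul]
      set A := ((S₁ n)⁻¹ * S₂ n).mulVec z i - z i with hA
      set B := (S₁ n)⁻¹.mulVec (μ₁ n - μ₂ n) i with hBd
      set C := ((S₂ n)⁻¹ * S₁ n).mulVec ((S₁ n)⁻¹.mulVec (μ₁ n - μ₂ n)) i with hC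
      have e1 : |1 - s| ≤ 1 := by rw [abs_of_nonneg (by linarith)]; linarith
      have e2 : |s| ≤ 1 := by rw [abs_of_nonneg hs1]; exact hs2
      have key : z i + s * A - s * s * B - s * (1 - s) * C - z i
          = s * A + (-(s * s)) * B + (-(s * (1 - s))) * C := by ring
      rw [key]
      have b1 : |s * A| ≤ |A| := by
        rw [abs_mul]; exact mul_le_of_le_one_left (abs_nonneg A) e2
      have b2 : |(-(s * s)) * B| ≤ |B| := by
        rw [abs_mul, abs_neg, abs_mul]
        exact mul_le_of_le_one_left (abs_nonneg B) (mul_le_one₀ e2 (abs_nonneg s) e2)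
      have b3 : |(-(s * (1 - s))) * C| ≤ |C| := by
        rw [abs_mul, abs_neg, abs_mul]
        exact mul_le_of_le_one_left (abs_nonneg C) (mul_le_one₀ e2 (abs_nonneg (1 - s)) e1)
      calc |s * A + (-(s * s)) * B + (-(s * (1 - s))) * C|
          ≤ |s * A| + |(-(s * s)) * B| + |(-(s * (1 - s))) * C| := abs_add_three _ _ _
        _ ≤ |A| + (|B| + |C|) := by linarith
    · simpa using ((hBz i).abs.add ((hΔi i).abs.add ((hτΔ i).abs)))
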